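/- There exists a strict approximation-preserving reduction from the general incremental knapsack problem (IK) with discounts Δ_t to IIK, obtained by replicating each time t exactly Δ_t times: given an IK instance (n, p, w, T, b, Δ) with Δ_t ∈ ℤ_{>0}, define T' = Σ_t Δ_t and capacities b'_{t'} = b_t for δ_t + 1 ≤ t' ≤ δ_t + Δ_t where δ_t = Σ_{s<t} Δ_s. Then: (a) for every feasible IK solution x with objective Σ_t Δ_t p^T x_t there is a feasible IIK solution x' with Σ_{t'} p^T x'_{t'} equal to the IK objective of x; (b) for every feasible IIK solution x̂, the solution x̄_t := x̂_{δ_t + Δ_t} is feasible for IK and has IK objective at least Σ_{t'} p^T x̂_{t'}. -/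

import Mathlib

open Finset
open Finset

private lemma chain_mono' {n : ℕ} (x : ℕ → Fin n → ℝ) (N : ℕ)
    (hmono : ∀ t, 1 ≤ t → t < N → ∀ i, x t i ≤ x (t + 1) i) :
    ∀ a b, 1 ≤ a → a ≤ b → b ≤ N → ∀ i, x a i ≤ x b i := by
  intro a b ha
  induction b with
  | zero => intro hab _ _; exact absurd hab (by omega)
  | succ b ih =>
    intro hab hbN i
    rcases Nat.eq_or_lt_of_le hab with h | h
    · rw [h]
    · exact (ih (by omega) (by omega) i).trans (hmono b (by omega) (by omega) i)

private lemma f_step' (Δ : ℕ → ℕ) (t : ℕ) (ht : 1 ≤ t) :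
    ∑ s ∈ Icc 1 t, Δ s = (∑ s ∈ Icc 1 (t - 1), Δ s) + Δ t := by
  obtain ⟨u, rfl⟩ : ∃ u, t = u + 1 := ⟨t - 1, by omega⟩
  rw [Finset.sum_Icc_succ_top (by omega), Nat.add_sub_cancel]

private lemma f_mono' (Δ : ℕ → ℕ) {a b : ℕ} (hab : a ≤ b) :
    (∑ s ∈ Icc 1 a, Δ s) ≤ ∑ s ∈ Icc 1 b, Δ s :=
  Finset.sum_le_sum_of_subset (Finset.Icc_subset_Icc_right hab)

private lemma icc_eq_ioc (M : ℕ) : Finset.Icc 1 M = Finset.Ioc 0 M := by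
  ext a; simp only [mem_Icc, mem_Ioc]; omega

private lemma sum_blocks' (Δ : ℕ → ℕ) (h : ℕ → ℝ) (N : ℕ) :
    ∑ t' ∈ Icc 1 (∑ s ∈ Icc 1 N, Δ s), h t' =
      ∑ t ∈ Icc 1 N, ∑ t' ∈ Ioc (∑ s ∈ Icc 1 (t - 1), Δ s) (∑ s ∈ Icc 1 t, Δ s), h t' := by
  rw [icc_eq_ioc]
  induction N with
  | zero => simp
  | succ N ih =>
    have hf : (∑ s ∈ Icc 1 (N + 1), Δ s) = (∑ s ∈ Icc 1 N, Δ s) + Δ (N + 1) :=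
      Finset.sum_Icc_succ_top (by omega) _
    rw [hf, ← Finset.sum_Ioc_consecutive h (Nat.zero_le _)
        (Nat.le_add_right (∑ s ∈ Icc 1 N, Δ s) (Δ (N + 1))), ih,
      Finset.sum_Icc_succ_top (show 1 ≤ N + 1 by omega)]
    congr 1
    rw [Nat.add_sub_cancel, hf]

private lemma g_eq' (Δ : ℕ → ℕ) (t t' : ℕ)
    (hlt : (∑ s ∈ Icc 1 (t - 1), Δ s) < t') (hle : t' ≤ ∑ s ∈ Icc 1 t, Δ s) :
    sInf {u | t' ≤ ∑ s ∈ Icc 1 u, Δ s} = t := by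
  have hmem : t ∈ {u | t' ≤ ∑ s ∈ Icc 1 u, Δ s} := hle
  refine le_antisymm (Nat.sInf_le hmem) ?_
  by_contra h
  push_neg at h
  have hmem' := Nat.sInf_mem (s := {u | t' ≤ ∑ s ∈ Icc 1 u, Δ s}) ⟨t, hmem⟩
  simp only [Set.mem_setOf_eq] at hmem'
  have hle' : (∑ s ∈ Icc 1 (sInf {u | t' ≤ ∑ s ∈ Icc 1 u, Δ s}), Δ s) ≤
      ∑ s ∈ Icc 1 (t - 1), Δ s := f_mono' Δ (by omega)
  omega

private lemma g_spec' (Δ : ℕ → ℕ) (T t' : ℕ) (h1 : 1 ≤ t')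
    (h2 : t' ≤ ∑ s ∈ Icc 1 T, Δ s) :
    1 ≤ sInf {u | t' ≤ ∑ s ∈ Icc 1 u, Δ s} ∧
    sInf {u | t' ≤ ∑ s ∈ Icc 1 u, Δ s} ≤ T ∧
    (∑ s ∈ Icc 1 (sInf {u | t' ≤ ∑ s ∈ Icc 1 u, Δ s} - 1), Δ s) < t' ∧
    t' ≤ ∑ s ∈ Icc 1 (sInf {u | t' ≤ ∑ s ∈ Icc 1 u, Δ s}), Δ s := by
  have hT : T ∈ {u | t' ≤ ∑ s ∈ Icc 1 u, Δ s} := h2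
  have hmem := Nat.sInf_mem (s := {u | t' ≤ ∑ s ∈ Icc 1 u, Δ s}) ⟨T, hT⟩
  simp only [Set.mem_setOf_eq] at hmem
  have hleT : sInf {u | t' ≤ ∑ s ∈ Icc 1 u, Δ s} ≤ T := Nat.sInf_le hT
  have hg1 : 1 ≤ sInf {u | t' ≤ ∑ s ∈ Icc 1 u, Δ s} := by
    by_contra h
    have h0 : sInf {u | t' ≤ ∑ s ∈ Icc 1 u, Δ s} = 0 := by omega
    rw [h0] at hmem
    simp at hmem
    omega
  have hnm := Nat.notMem_of_lt_sInf (s := {u | t' ≤ ∑ s ∈ Icc 1 u, Δ s})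
    (show sInf {u | t' ≤ ∑ s ∈ Icc 1 u, Δ s} - 1 < sInf {u | t' ≤ ∑ s ∈ Icc 1 u, Δ s} by omega)
  simp only [Set.mem_setOf_eq, not_le] at hnm
  exact ⟨hg1, hleT, hnm, hmem⟩

/-- Strict approximation-preserving reduction from incremental knapsack (IK)
with discounts `Δ` to IIK, replicating each time `t` exactly `Δ_t` times.
With `δ_t = Σ_{s<t} Δ_s` and `T' = Σ_t Δ_t`, capacities `b'_{t'} = b_t` for
`δ_t + 1 ≤ t' ≤ δ_t + Δ_t`:
(a) every feasible IK solution `x` yields a feasible IIK solution `x'` whose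
IIK objective equals the IK objective of `x`;
(b) for every feasible IIK solution `x̂`, the solution `x̄_t := x̂_{δ_t + Δ_t}`
is feasible for IK with IK objective at least the IIK objective of `x̂`. -/
theorem IK_to_IIK_reduction (n T : ℕ) (p w : Fin n → ℝ) (b : ℕ → ℝ)
    (hp : ∀ i, 0 < p i) (hw : ∀ i, 0 < w i)
    (Δ : ℕ → ℕ) (hΔ : ∀ t ∈ Finset.Icc 1 T, 0 < Δ t)
    (b' : ℕ → ℝ)
    (hb' : ∀ t ∈ Finset.Icc 1 T, ∀ t',
      (∑ s ∈ Finset.Icc 1 (t - 1), Δ s) + 1 ≤ t' →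
      t' ≤ (∑ s ∈ Finset.Icc 1 (t - 1), Δ s) + Δ t → b' t' = b t) :
    -- (a)
    (∀ x : ℕ → Fin n → ℝ,
      (∀ t ∈ Finset.Icc 1 T, ∀ i, x t i = 0 ∨ x t i = 1) →
      (∀ t, 1 ≤ t → t < T → ∀ i, x t i ≤ x (t + 1) i) →
      (∀ t ∈ Finset.Icc 1 T, ∑ i, w i * x t i ≤ b t) →
      ∃ x' : ℕ → Fin n → ℝ,
        (∀ t' ∈ Finset.Icc 1 (∑ t ∈ Finset.Icc 1 T, Δ t), ∀ i,
          x' t' i = 0 ∨ x' t' i = 1) ∧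
        (∀ t', 1 ≤ t' → t' < ∑ t ∈ Finset.Icc 1 T, Δ t → ∀ i,
          x' t' i ≤ x' (t' + 1) i) ∧
        (∀ t' ∈ Finset.Icc 1 (∑ t ∈ Finset.Icc 1 T, Δ t),
          ∑ i, w i * x' t' i ≤ b' t') ∧
        (∑ t' ∈ Finset.Icc 1 (∑ t ∈ Finset.Icc 1 T, Δ t), ∑ i, p i * x' t' i =
          ∑ t ∈ Finset.Icc 1 T, (Δ t : ℝ) * ∑ i, p i * x t i)) ∧
    -- (b)
    (∀ xh : ℕ → Fin n → ℝ,
      (∀ t' ∈ Finset.Icc 1 (∑ t ∈ Finset.Icc 1 T, Δ t), ∀ i,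
        xh t' i = 0 ∨ xh t' i = 1) →
      (∀ t', 1 ≤ t' → t' < ∑ t ∈ Finset.Icc 1 T, Δ t → ∀ i,
        xh t' i ≤ xh (t' + 1) i) →
      (∀ t' ∈ Finset.Icc 1 (∑ t ∈ Finset.Icc 1 T, Δ t),
        ∑ i, w i * xh t' i ≤ b' t') →
      (∀ t ∈ Finset.Icc 1 T,
        ∑ i, w i * xh ((∑ s ∈ Finset.Icc 1 (t - 1), Δ s) + Δ t) i ≤ b t) ∧
      (∀ t, 1 ≤ t → t < T → ∀ i,
        xh ((∑ s ∈ Finset.Icc 1 (t - 1), Δ s) + Δ t) i ≤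
          xh ((∑ s ∈ Finset.Icc 1 t, Δ s) + Δ (t + 1)) i) ∧
      (∑ t' ∈ Finset.Icc 1 (∑ t ∈ Finset.Icc 1 T, Δ t), ∑ i, p i * xh t' i ≤
        ∑ t ∈ Finset.Icc 1 T, (Δ t : ℝ) *
          ∑ i, p i * xh ((∑ s ∈ Finset.Icc 1 (t - 1), Δ s) + Δ t) i)) := by
  constructor
  · -- part (a)
    intro x hbin hxm hcap
    refine ⟨fun t' => x (sInf {u | t' ≤ ∑ s ∈ Icc 1 u, Δ s}), ?_, ?_, ?_, ?_⟩
    · -- binary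
      intro t' ht' i
      simp only [mem_Icc] at ht'
      obtain ⟨hg1, hgT, -, -⟩ := g_spec' Δ T t' ht'.1 ht'.2
      exact hbin _ (mem_Icc.mpr ⟨hg1, hgT⟩) i
    · -- monotone
      intro t' h1 h2 i
      obtain ⟨ha1, -, -, -⟩ := g_spec' Δ T t' h1 (le_of_lt h2)
      obtain ⟨-, hbT, -, hble⟩ := g_spec' Δ T (t' + 1) (by omega) h2
      have hab : sInf {u | t' ≤ ∑ s ∈ Icc 1 u, Δ s} ≤
          sInf {u | t' + 1 ≤ ∑ s ∈ Icc 1 u, Δ s} :=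
        Nat.sInf_le (show t' ≤ _ by omega)
      exact chain_mono' x T hxm _ _ ha1 hab hbT i
    · -- capacity
      intro t' ht'
      simp only [mem_Icc] at ht'
      obtain ⟨hg1, hgT, hlt, hle⟩ := g_spec' Δ T t' ht'.1 ht'.2
      have hb := hb' _ (mem_Icc.mpr ⟨hg1, hgT⟩) t' (by omega)
        (by rw [← f_step' Δ _ hg1]; exact hle)
      rw [hb]
      exact hcap _ (mem_Icc.mpr ⟨hg1, hgT⟩)
    · -- objective
      rw [sum_blocks']
      refine Finset.sum_congr rfl ?_
      intro t ht
      simp only [mem_Icc] at ht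
      have hstep := f_step' Δ t ht.1
      have heq : ∀ t' ∈ Ioc (∑ s ∈ Icc 1 (t - 1), Δ s) (∑ s ∈ Icc 1 t, Δ s),
          (∑ i, p i * x (sInf {u | t' ≤ ∑ s ∈ Icc 1 u, Δ s}) i) = ∑ i, p i * x t i := by
        intro t' ht'
        simp only [mem_Ioc] at ht'
        rw [g_eq' Δ t t' ht'.1 ht'.2]
      rw [Finset.sum_congr rfl heq, Finset.sum_const, Nat.card_Ioc, nsmul_eq_mul]
      congr 1
      rw [hstep]
      simp
  · -- part (b)
    intro xh hbin hxm hcap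
    have hchain := chain_mono' xh (∑ t ∈ Icc 1 T, Δ t) hxm
    refine ⟨?_, ?_, ?_⟩
    · -- capacity
      intro t ht
      simp only [mem_Icc] at ht
      have hΔt := hΔ t (mem_Icc.mpr ht)
      have hstep := f_step' Δ t ht.1
      have hfle : (∑ s ∈ Icc 1 t, Δ s) ≤ ∑ s ∈ Icc 1 T, Δ s := f_mono' Δ ht.2
      have hb := hb' t (mem_Icc.mpr ht) ((∑ s ∈ Icc 1 (t - 1), Δ s) + Δ t) (by omega) le_rfl
      rw [← hb]
      exact hcap _ (mem_Icc.mpr ⟨by omega, by omega⟩)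
    · -- monotone
      intro t h1 h2 i
      have hΔt := hΔ t (mem_Icc.mpr ⟨h1, by omega⟩)
      have hs1 := f_step' Δ t h1
      have hs2 := f_step' Δ (t + 1) (by omega)
      simp only [Nat.add_sub_cancel] at hs2
      have hleT : (∑ s ∈ Icc 1 (t + 1), Δ s) ≤ ∑ s ∈ Icc 1 T, Δ s := f_mono' Δ (by omega)
      rw [← hs1, ← hs2]
      exact hchain _ _ (by omega) (f_mono' Δ (by omega)) hleT i
    · -- objective
      rw [sum_blocks']
      refine Finset.sum_le_sum ?_
      intro t ht
      simp only [mem_Icc] at ht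
      have hΔt := hΔ t (mem_Icc.mpr ht)
      have hstep := f_step' Δ t ht.1
      have hfle : (∑ s ∈ Icc 1 t, Δ s) ≤ ∑ s ∈ Icc 1 T, Δ s := f_mono' Δ ht.2
      have hbound : ∀ t' ∈ Ioc (∑ s ∈ Icc 1 (t - 1), Δ s) (∑ s ∈ Icc 1 t, Δ s),
          (∑ i, p i * xh t' i) ≤ ∑ i, p i * xh ((∑ s ∈ Icc 1 (t - 1), Δ s) + Δ t) i := by
        intro t' ht'
        simp only [mem_Ioc] at ht'
        refine Finset.sum_le_sum fun i _ => ?_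
        exact mul_le_mul_of_nonneg_left
          (hchain t' _ (by omega) (by omega) (by omega) i) (hp i).le
      have hcard : (Ioc (∑ s ∈ Icc 1 (t - 1), Δ s) (∑ s ∈ Icc 1 t, Δ s)).card = Δ t := by
        rw [Nat.card_Ioc]
        omega
      calc ∑ t' ∈ Ioc (∑ s ∈ Icc 1 (t - 1), Δ s) (∑ s ∈ Icc 1 t, Δ s), ∑ i, p i * xh t' i
          ≤ (Ioc (∑ s ∈ Icc 1 (t - 1), Δ s) (∑ s ∈ Icc 1 t, Δ s)).card •
            ∑ i, p i * xh ((∑ s ∈ Icc 1 (t - 1), Δ s) + Δ t) i :=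
            Finset.sum_le_card_nsmul _ _ _ hbound
        _ = (Δ t : ℝ) * ∑ i, p i * xh ((∑ s ∈ Icc 1 (t - 1), Δ s) + Δ t) i := by
            rw [hcard, nsmul_eq_mul]
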